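/- Let A ⊆ E be a subset of the even side of the hypercube Q_d centered so that A is an even Hamming ball around the all-zeros vertex contained in radius k+2 and containing radius k, with k ≤ d/4. Then |N(A)| - |A| ≥ |N(A)|/3. -/

import Mathlib

open Finset

/-- The `d`-dimensional hypercube graph. -/
def cubeGraph (d : ℕ) : SimpleGraph (Fin d → ZMod 2) where
  Adj x y := hammingDist x y = 1
  symm := ⟨by intro x y h; rwa [hammingDist_comm]⟩
  loopless := ⟨by intro x h; simp [hammingDist_self] at h⟩

/-- Hamming weight of a vertex of the cube. -/
def wt {d : ℕ} (v : Fin d → ZMod 2) : ℕ := hammingDist v 0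

/-- The even bipartition class of the hypercube. -/
def evenSide (d : ℕ) : Set (Fin d → ZMod 2) := {v | ∑ i, v i = 0}

/-- The neighbourhood of a set of vertices. -/
def nbhd {V : Type*} (G : SimpleGraph V) (A : Set V) : Set V := {y | ∃ a ∈ A, G.Adj a y}

instance cubeAdjDec {d : ℕ} : DecidableRel (cubeGraph d).Adj :=
  fun x y => inferInstanceAs (Decidable (hammingDist x y = 1))

lemma zmod2_eq_one {x : ZMod 2} (h : x ≠ 0) : x = 1 := by
  revert h; revert x; decide

lemma zmod2_ne {x y : ZMod 2} (h : x ≠ y) : x = y + 1 := by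
  revert h; revert x y; decide

lemma wt_def {d : ℕ} (v : Fin d → ZMod 2) :
    wt v = (univ.filter fun i => v i ≠ 0).card := by
  simp [wt, hammingDist]

lemma adj_exists {d : ℕ} {x y : Fin d → ZMod 2} (h : (cubeGraph d).Adj x y) :
    ∃ i, x i ≠ y i ∧ ∀ j, j ≠ i → x j = y j := by
  have h' : (univ.filter fun i => x i ≠ y i).card = 1 := h
  obtain ⟨i, hi⟩ := Finset.card_eq_one.mp h'
  refine ⟨i, ?_, ?_⟩
  · have : i ∈ univ.filter fun i => x i ≠ y i := hi ▸ Finset.mem_singleton_self i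
    simpa using this
  · intro j hj
    by_contra hne
    have hmem : j ∈ univ.filter fun i => x i ≠ y i := by simp [hne]
    rw [hi, Finset.mem_singleton] at hmem
    exact hj hmem

lemma adj_of {d : ℕ} {x y : Fin d → ZMod 2} (i : Fin d) (hne : x i ≠ y i)
    (hag : ∀ j, j ≠ i → x j = y j) : (cubeGraph d).Adj x y := by
  show hammingDist x y = 1
  show (univ.filter fun j => x j ≠ y j).card = 1
  have hset : (univ.filter fun j => x j ≠ y j) = {i} := by
    ext j
    simp only [Finset.mem_filter, Finset.mem_univ, true_and, Finset.mem_singleton]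
    constructor
    · intro hj; by_contra hji; exact hj (hag j hji)
    · intro hj; subst hj; exact hne
  rw [hset]; simp

lemma wt_step {d : ℕ} {x y : Fin d → ZMod 2} (i : Fin d) (hx : x i = 0) (hy : y i ≠ 0)
    (hag : ∀ j, j ≠ i → x j = y j) : wt y = wt x + 1 := by
  rw [wt_def, wt_def]
  have hset : (univ.filter fun j => y j ≠ 0) = insert i (univ.filter fun j => x j ≠ 0) := by
    ext j
    simp only [Finset.mem_filter, Finset.mem_univ, true_and, Finset.mem_insert]
    by_cases hj : j = i
    · subst hj; simp [hy]
    · rw [← hag j hj]; simp [hj]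
  rw [hset, Finset.card_insert_of_notMem (by simp [hx])]

lemma card_zeros {d : ℕ} (v : Fin d → ZMod 2) :
    (univ.filter fun i => v i = 0).card = d - wt v := by
  rw [wt_def]
  have h := Finset.card_filter_add_card_filter_not
    (s := (univ : Finset (Fin d))) (p := fun i => v i = 0)
  simp only [Finset.card_univ, Fintype.card_fin, ne_eq, not_not] at h ⊢
  omega

lemma up_card {d : ℕ} (s : Fin d → ZMod 2) :
    d - wt s ≤ (univ.filter fun u => (cubeGraph d).Adj s u ∧ wt u = wt s + 1).card := by
  rw [← card_zeros s]
  apply Finset.card_le_card_of_injOn (fun i => Function.update s i 1)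
  · intro i hi
    simp only [Finset.mem_coe, Finset.mem_filter, Finset.mem_univ, true_and] at hi ⊢
    have hne : s i ≠ Function.update s i 1 i := by
      rw [Function.update_self, hi]; exact zero_ne_one
    have hag : ∀ j, j ≠ i → s j = Function.update s i 1 j :=
      fun j hj => (Function.update_of_ne hj 1 s).symm
    refine ⟨adj_of i hne hag, ?_⟩
    exact wt_step i hi (by rw [Function.update_self]; exact one_ne_zero) hag
  · intro i hi j hj hij
    by_contra hne
    have h1 : Function.update s i 1 i = Function.update s j 1 i := congrFun hij i
    rw [Function.update_self, Function.update_of_ne hne] at h1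
    simp only [Finset.coe_filter, Set.mem_setOf_eq, Finset.mem_univ, true_and] at hi
    rw [hi] at h1
    exact one_ne_zero h1

lemma down_card {d : ℕ} (hd : 0 < d) (u : Fin d → ZMod 2) (T : Finset (Fin d → ZMod 2)) :
    (T.filter fun a => (cubeGraph d).Adj a u ∧ wt u = wt a + 1).card ≤ wt u := by
  haveI : Inhabited (Fin d) := ⟨⟨0, hd⟩⟩
  have key : (T.filter fun a => (cubeGraph d).Adj a u ∧ wt u = wt a + 1).card
      ≤ (univ.filter fun i => u i ≠ 0).card := by
    apply Finset.card_le_card_of_injOn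
      (fun a => if h : ∃ i, a i ≠ u i then h.choose else default)
    · intro a ha
      simp only [Finset.mem_coe, Finset.mem_filter] at ha
      obtain ⟨-, hadj, hwt⟩ := ha
      obtain ⟨i, hne, hag⟩ := adj_exists hadj
      have hex : ∃ j, a j ≠ u j := ⟨i, hne⟩
      simp only [dif_pos hex]
      have hji : hex.choose = i := by
        by_contra hc
        exact hex.choose_spec (hag _ hc)
      simp only [Finset.mem_coe, Finset.mem_filter, Finset.mem_univ, true_and]
      rw [hji]
      intro hu0
      have ha1 : a i ≠ 0 := by rw [hu0] at hne; exact hne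
      have hstep : wt a = wt u + 1 := wt_step i hu0 ha1 (fun j hj' => (hag j hj').symm)
      omega
    · intro a ha b hb hab
      simp only [Finset.coe_filter, Set.mem_setOf_eq] at ha hb
      obtain ⟨-, hadja, hwta⟩ := ha
      obtain ⟨-, hadjb, hwtb⟩ := hb
      obtain ⟨i, hne_a, hag_a⟩ := adj_exists hadja
      obtain ⟨i', hne_b, hag_b⟩ := adj_exists hadjb
      have hexa : ∃ j, a j ≠ u j := ⟨i, hne_a⟩
      have hexb : ∃ j, b j ≠ u j := ⟨i', hne_b⟩
      have hab' : (if h : ∃ i, a i ≠ u i then h.choose else default)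
          = (if h : ∃ i, b i ≠ u i then h.choose else default) := hab
      rw [dif_pos hexa, dif_pos hexb] at hab'
      have hia : hexa.choose = i := by
        by_contra hc; exact hexa.choose_spec (hag_a _ hc)
      have hib : hexb.choose = i' := by
        by_contra hc; exact hexb.choose_spec (hag_b _ hc)
      rw [hia, hib] at hab'
      subst hab'
      funext j
      by_cases hji : j = i
      · subst hji
        rw [zmod2_ne hne_a, zmod2_ne hne_b]
      · rw [hag_a j hji, ← hag_b j hji]

  rw [wt_def]
  exact key

lemma sum_eq_wt {d : ℕ} (v : Fin d → ZMod 2) : ∑ i, v i = (wt v : ZMod 2) := by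
  rw [wt_def, ← Finset.sum_filter_ne_zero]
  have h : ∀ i ∈ univ.filter fun i => v i ≠ 0, v i = 1 :=
    fun i hi => zmod2_eq_one (by simpa using hi)
  rw [Finset.sum_congr rfl h, Finset.sum_const, nsmul_eq_mul, mul_one]

lemma mem_evenSide_iff {d : ℕ} (v : Fin d → ZMod 2) : v ∈ evenSide d ↔ Even (wt v) := by
  show (∑ i, v i = 0) ↔ _
  rw [sum_eq_wt, ZMod.natCast_eq_zero_iff, Nat.even_iff]
  omega

/-- for large `d`, if `A` is an even Hamming ball about the all-zeros
vertex containing radius `k` and contained in radius `k + 2`, with `k` even and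
`k ≤ d/4`, then `|N(A)| - |A| ≥ |N(A)|/3`. -/
theorem even_hamming_ball_expansion :
    ∃ d₀ : ℕ, ∀ d ≥ d₀, ∀ k : ℕ, Even k → 4 * k ≤ d →
      ∀ A : Set (Fin d → ZMod 2),
        {v ∈ evenSide d | wt v ≤ k} ⊆ A → A ⊆ {v ∈ evenSide d | wt v ≤ k + 2} →
        ((nbhd (cubeGraph d) A).ncard : ℝ) - A.ncard ≥ (nbhd (cubeGraph d) A).ncard / 3 := by
  classical
  refine ⟨18, ?_⟩
  intro d hd k hk hkd A hlow hhigh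
  have hd0 : 0 < d := by omega
  have hAfin : A.Finite := Set.toFinite A
  have hNfin : (nbhd (cubeGraph d) A).Finite := Set.toFinite _
  set Af := hAfin.toFinset with hAfdef
  set Nf := hNfin.toFinset with hNfdef
  set EB := univ.filter (fun v => Even (wt v) ∧ wt v ≤ k) with hEBdef
  set OB := univ.filter (fun v => ¬ Even (wt v) ∧ wt v ≤ k + 1) with hOBdef
  set B := Af.filter (fun v => wt v = k + 2) with hBdef
  set U := univ.filter (fun u => wt u = k + 3 ∧ ∃ b ∈ B, (cubeGraph d).Adj b u) with hUdef
  have hmemA : ∀ v, v ∈ Af ↔ v ∈ A := fun v => hAfin.mem_toFinset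
  have hmemN : ∀ v, v ∈ Nf ↔ v ∈ nbhd (cubeGraph d) A := fun v => hNfin.mem_toFinset
  have hAprop : ∀ v ∈ A, Even (wt v) ∧ wt v ≤ k + 2 := by
    intro v hv
    obtain ⟨hv1, hv2⟩ := hhigh hv
    exact ⟨(mem_evenSide_iff v).mp hv1, hv2⟩
  have hlow' : ∀ v, Even (wt v) → wt v ≤ k → v ∈ A := by
    intro v h1 h2
    exact hlow ⟨(mem_evenSide_iff v).mpr h1, h2⟩
  -- splitting A
  have hsplit : Af = EB ∪ B := by
    ext v
    constructor
    · intro hv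
      have hvA : v ∈ A := (hmemA v).mp hv
      obtain ⟨he, hle⟩ := hAprop v hvA
      by_cases hcase : wt v ≤ k
      · exact Finset.mem_union_left _ (by simp [hEBdef, he, hcase])
      · have hveq : wt v = k + 2 := by
          have hek := Nat.even_iff.mp hk
          have hev := Nat.even_iff.mp he
          omega
        exact Finset.mem_union_right _ (by simp [hBdef, Finset.mem_filter, hv, hveq])
    · intro hv
      rcases Finset.mem_union.mp hv with h | h
      · simp only [hEBdef, Finset.mem_filter, Finset.mem_univ, true_and] at h
        exact (hmemA v).mpr (hlow' v h.1 h.2)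
      · exact Finset.mem_of_mem_filter v h
  have hdisj : Disjoint EB B := by
    rw [Finset.disjoint_left]
    intro v hvE hvB
    simp only [hEBdef, Finset.mem_filter, Finset.mem_univ, true_and] at hvE
    simp only [hBdef, Finset.mem_filter] at hvB
    omega
  have hcardA : Af.card = EB.card + B.card := by
    rw [hsplit, Finset.card_union_of_disjoint hdisj]
  -- N(A) contains OB and U
  have hOBsub : OB ⊆ Nf := by
    intro v hv
    simp only [hOBdef, Finset.mem_filter, Finset.mem_univ, true_and] at hv
    obtain ⟨hodd, hle⟩ := hv
    have hpos : wt v ≠ 0 := by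
      intro h0; rw [h0] at hodd; exact hodd Even.zero
    have hex : ∃ i, v i ≠ 0 := by
      by_contra hc
      push_neg at hc
      have : wt v = 0 := by rw [wt_def]; simp [hc]
      exact hpos this
    obtain ⟨i, hi⟩ := hex
    set a := Function.update v i 0 with hadef
    have hag : ∀ j, j ≠ i → a j = v j := fun j hj => Function.update_of_ne hj 0 v
    have hai : a i = 0 := Function.update_self i 0 v
    have hwt : wt v = wt a + 1 := wt_step i hai hi hag
    have heva : Even (wt a) := by
      rcases Nat.even_or_odd (wt a) with h | h
      · exact h
      · exact absurd (by rw [hwt]; exact Odd.add_one h) hodd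
    have haA : a ∈ A := hlow' a heva (by omega)
    have hne : a i ≠ v i := by rw [hai]; exact fun h => hi h.symm
    exact (hmemN v).mpr ⟨a, haA, adj_of i hne hag⟩
  have hUsub : U ⊆ Nf := by
    intro u hu
    simp only [hUdef, Finset.mem_filter, Finset.mem_univ, true_and] at hu
    obtain ⟨-, b, hbB, hadj⟩ := hu
    have hbA : b ∈ A := (hmemA b).mp (Finset.mem_of_mem_filter b hbB)
    exact (hmemN u).mpr ⟨b, hbA, hadj⟩
  have hdisj2 : Disjoint OB U := by
    rw [Finset.disjoint_left]
    intro v h1 h2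
    simp only [hOBdef, Finset.mem_filter, Finset.mem_univ, true_and] at h1
    simp only [hUdef, Finset.mem_filter, Finset.mem_univ, true_and] at h2
    omega
  have hcardN : OB.card + U.card ≤ Nf.card := by
    rw [← Finset.card_union_of_disjoint hdisj2]
    exact Finset.card_le_card (Finset.union_subset hOBsub hUsub)
  -- double counting between EB and OB
  have hc3 : EB.card * (d - k) ≤ OB.card * (k + 1) := by
    apply Finset.card_mul_le_card_mul (fun a u => (cubeGraph d).Adj a u ∧ wt u = wt a + 1)
    · intro a ha
      simp only [hEBdef, Finset.mem_filter, Finset.mem_univ, true_and] at ha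
      obtain ⟨hae, hak⟩ := ha
      have hsub : (univ.filter fun u => (cubeGraph d).Adj a u ∧ wt u = wt a + 1)
          ⊆ Finset.bipartiteAbove (fun a u => (cubeGraph d).Adj a u ∧ wt u = wt a + 1) OB a := by
        intro u hu
        simp only [Finset.mem_filter, Finset.mem_univ, true_and] at hu
        rw [Finset.mem_bipartiteAbove]
        refine ⟨?_, hu⟩
        simp only [hOBdef, Finset.mem_filter, Finset.mem_univ, true_and]
        constructor
        · rw [hu.2]; exact fun h => (Nat.even_add_one.mp h) hae
        · omega
      calc d - k ≤ d - wt a := by omega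
        _ ≤ _ := up_card a
        _ ≤ _ := Finset.card_le_card hsub
    · intro u hu
      simp only [hOBdef, Finset.mem_filter, Finset.mem_univ, true_and] at hu
      exact (down_card hd0 u EB).trans hu.2
  -- double counting between B and U
  have hBwt : ∀ b ∈ B, wt b = k + 2 := fun b hb => (Finset.mem_filter.mp hb).2
  have hc4 : B.card * (d - (k + 2)) ≤ U.card * (k + 3) := by
    apply Finset.card_mul_le_card_mul (fun a u => (cubeGraph d).Adj a u ∧ wt u = wt a + 1)
    · intro b hb
      have hw := hBwt b hb
      have hsub : (univ.filter fun u => (cubeGraph d).Adj b u ∧ wt u = wt b + 1)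
          ⊆ Finset.bipartiteAbove (fun a u => (cubeGraph d).Adj a u ∧ wt u = wt a + 1) U b := by
        intro u hu
        simp only [Finset.mem_filter, Finset.mem_univ, true_and] at hu
        rw [Finset.mem_bipartiteAbove]
        refine ⟨?_, hu⟩
        simp only [hUdef, Finset.mem_filter, Finset.mem_univ, true_and]
        exact ⟨by omega, b, hb, hu.1⟩
      calc d - (k + 2) = d - wt b := by rw [hw]
        _ ≤ _ := up_card b
        _ ≤ _ := Finset.card_le_card hsub
    · intro u hu
      simp only [hUdef, Finset.mem_filter, Finset.mem_univ, true_and] at hu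
      exact (down_card hd0 u B).trans (by omega)
  -- arithmetic
  have hk2 : 3 * (k + 1) ≤ 2 * (d - k) := by omega
  have hk3 : 3 * (k + 3) ≤ 2 * (d - (k + 2)) := by omega
  have h5 : 3 * EB.card ≤ 2 * OB.card := by
    have hmul : (3 * EB.card) * (d - k) ≤ (2 * OB.card) * (d - k) := by
      calc (3 * EB.card) * (d - k) = 3 * (EB.card * (d - k)) := by ring
        _ ≤ 3 * (OB.card * (k + 1)) := Nat.mul_le_mul_left 3 hc3
        _ = OB.card * (3 * (k + 1)) := by ring
        _ ≤ OB.card * (2 * (d - k)) := Nat.mul_le_mul_left _ hk2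
        _ = (2 * OB.card) * (d - k) := by ring
    exact Nat.le_of_mul_le_mul_right hmul (by omega)
  have h6 : 3 * B.card ≤ 2 * U.card := by
    have hmul : (3 * B.card) * (d - (k + 2)) ≤ (2 * U.card) * (d - (k + 2)) := by
      calc (3 * B.card) * (d - (k + 2)) = 3 * (B.card * (d - (k + 2))) := by ring
        _ ≤ 3 * (U.card * (k + 3)) := Nat.mul_le_mul_left 3 hc4
        _ = U.card * (3 * (k + 3)) := by ring
        _ ≤ U.card * (2 * (d - (k + 2))) := Nat.mul_le_mul_left _ hk3
        _ = (2 * U.card) * (d - (k + 2)) := by ring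
    exact Nat.le_of_mul_le_mul_right hmul (by omega)
  have hfinal : 3 * Af.card ≤ 2 * Nf.card := by omega
  have hA' : (A.ncard : ℝ) = Af.card := by
    rw [Set.ncard_eq_toFinset_card A hAfin]
  have hN' : ((nbhd (cubeGraph d) A).ncard : ℝ) = Nf.card := by
    rw [Set.ncard_eq_toFinset_card _ hNfin]
  have hfinal' : (3 : ℝ) * Af.card ≤ 2 * Nf.card := by exact_mod_cast hfinal
  rw [ge_iff_le, hA', hN']
  linarith
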